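/- Let A ∈ Mat_{n×n}(ℝ), I ∈ ℐ_n̲, and let x ∈ ℝ^n satisfy x_j = 0 for all j ∉ I. Then π_A(x)_{ij} = 0 whenever i ∉ I or j ∉ I, and for all i,j ∈ I, π_A(x)_{ij} = π_{A_I}(x|_I)_{ij}, where x|_I is the vector of coordinates of x indexed by I and π_{A_I} is built from the restricted game (n̲^I, A_I). (Thus the inclusion of the face σ_I into Γ_n̲ is a Poisson map, and the faces make Γ_n̲ a Poisson stratified space.) -/

import Mathlib

open Matrix

/-- Index set of a polymatrix game with signature `n : Fin p → ℕ`. -/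
abbrev Idx (p : ℕ) (n : Fin p → ℕ) : Type := (α : Fin p) × Fin (n α)

noncomputable section

/-- The block diagonal matrix `T_x` for an index set `ι` with group map `g`:
`(T_x)_{ij} = x_i [g i = g j] - δ_{ij}` (i.e. `T^α_x = x^α 𝟙ᵗ - I` on each group). -/
def Tm {ι γ : Type} [DecidableEq ι] [DecidableEq γ] (g : ι → γ) (x : ι → ℝ) :
    Matrix ι ι ℝ :=
  fun i j => (if g i = g j then x i else 0) - (if i = j then 1 else 0)

/-- The bivector `π_A(x) = - T_x D_x A D_x T_xᵀ` for an index set `ι` with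
group map `g`. -/
def piG {ι γ : Type} [Fintype ι] [DecidableEq ι] [DecidableEq γ] (g : ι → γ)
    (A : Matrix ι ι ℝ) (x : ι → ℝ) : Matrix ι ι ℝ :=
  -(Tm g x * Matrix.diagonal x * A * Matrix.diagonal x * (Tm g x)ᵀ)

/-- If `x_j = 0` for all `j ∉ I`, then `π_A(x)_{ij} = 0` whenever `i ∉ I` or `j ∉ I`,
and on the indices of `I` the bivector `π_A(x)` coincides with the bivector
`π_{A_I}(x|_I)` of the restricted game `(n̲^I, A_I)`: the inclusion of the face `σ_I`
is a Poisson map, making `Γ_n̲` a Poisson stratified space. -/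
theorem piG_apply {ι γ : Type} [Fintype ι] [DecidableEq ι] [DecidableEq γ] (g : ι → γ)
    (A : Matrix ι ι ℝ) (x : ι → ℝ) (i j : ι) :
    piG g A x i j = -(∑ l, (∑ k, Tm g x i k * x k * A k l) * (x l * Tm g x j l)) := by
  simp only [piG, Matrix.neg_apply, Matrix.mul_apply, Matrix.diagonal_apply,
    Matrix.transpose_apply, ite_mul, zero_mul, mul_ite, mul_zero,
    Finset.sum_ite_eq, Finset.sum_ite_eq', Finset.mem_univ, if_true]
  rw [neg_inj]
  exact Finset.sum_congr rfl fun l _ => by ring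

theorem stmt18 {p : ℕ} {n : Fin p → ℕ} (hn : ∀ α, 0 < n α)
    (A : Matrix (Idx p n) (Idx p n) ℝ) (I : Finset (Idx p n))
    (hI : ∀ α : Fin p, ∃ k : Fin (n α), (⟨α, k⟩ : Idx p n) ∈ I)
    (x : Idx p n → ℝ) (hxI : ∀ j ∉ I, x j = 0) :
    (∀ i j : Idx p n, i ∉ I ∨ j ∉ I → piG Sigma.fst A x i j = 0) ∧
    (∀ (i j : Idx p n) (hi : i ∈ I) (hj : j ∈ I),
      piG (fun k : I => (k : Idx p n).1)
        (A.submatrix (Subtype.val : I → Idx p n) Subtype.val)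
        (fun k : I => x k) ⟨i, hi⟩ ⟨j, hj⟩ = piG Sigma.fst A x i j) := by
  -- key vanishing lemma : row factor vanishes when the row index is outside I
  have hrow : ∀ i ∉ I, ∀ k : Idx p n, Tm Sigma.fst x i k * x k = 0 := by
    intro i hi k
    by_cases hk : k ∈ I
    · have hik : i ≠ k := fun h => hi (h ▸ hk)
      simp [Tm, hxI i hi, hik]
    · simp [hxI k hk]
  constructor
  · intro i j h
    rw [piG_apply]
    rcases h with hi | hj
    · have : ∀ l, (∑ k, Tm Sigma.fst x i k * x k * A k l) = 0 := by
        intro l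
        refine Finset.sum_eq_zero fun k _ => ?_
        rw [hrow i hi k, zero_mul]
      simp [this]
    · have : ∀ l, x l * Tm Sigma.fst x j l = 0 := by
        intro l
        rw [mul_comm]; exact hrow j hj l
      simp [this]
  · intro i j hi hj
    have hTm : ∀ a b : I, Tm (fun k : I => (k : Idx p n).1) (fun k : I => x k) a b
        = Tm Sigma.fst x (a : Idx p n) (b : Idx p n) := by
      intro a b
      rcases a with ⟨a, ha⟩
      rcases b with ⟨b, hb⟩
      unfold Tm
      by_cases h : a = b
      · subst h
        simp only [if_true]
      · have h' : (⟨a, ha⟩ : I) ≠ ⟨b, hb⟩ := fun e => h (congrArg Subtype.val e)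
        rw [if_neg h', if_neg h]
    rw [piG_apply, piG_apply, neg_inj]
    have hinner : ∀ l : Idx p n,
        (∑ k ∈ I, Tm Sigma.fst x i k * x k * A k l)
          = ∑ k, Tm Sigma.fst x i k * x k * A k l := by
      intro l
      refine Finset.sum_subset (Finset.subset_univ I) fun k _ hk => ?_
      simp [hxI k hk]
    calc (∑ l : I, (∑ k : I, Tm (fun k : I => (k : Idx p n).1) (fun k : I => x k) ⟨i, hi⟩ k
            * x k * A.submatrix Subtype.val Subtype.val k l)
            * (x l * Tm (fun k : I => (k : Idx p n).1) (fun k : I => x k) ⟨j, hj⟩ l))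
        = ∑ l : I, (∑ k : I, Tm Sigma.fst x i (k : Idx p n) * x k * A k l)
            * (x l * Tm Sigma.fst x j (l : Idx p n)) := by
          refine Finset.sum_congr rfl fun l _ => ?_
          rw [hTm]
          congr 1
          refine Finset.sum_congr rfl fun k _ => ?_
          rw [hTm]
          rfl
      _ = ∑ l ∈ I, (∑ k ∈ I, Tm Sigma.fst x i k * x k * A k l)
            * (x l * Tm Sigma.fst x j l) := by
          rw [← Finset.sum_coe_sort I
            (fun l => (∑ k ∈ I, Tm Sigma.fst x i k * x k * A k l) * (x l * Tm Sigma.fst x j l))]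
          refine Finset.sum_congr rfl fun l _ => ?_
          congr 1
          exact Finset.sum_coe_sort I
            (fun k => Tm Sigma.fst x i k * x k * A k (l : Idx p n))
      _ = ∑ l ∈ I, (∑ k, Tm Sigma.fst x i k * x k * A k l)
            * (x l * Tm Sigma.fst x j l) :=
          Finset.sum_congr rfl fun l _ => by rw [hinner]
      _ = ∑ l, (∑ k, Tm Sigma.fst x i k * x k * A k l) * (x l * Tm Sigma.fst x j l) :=
          Finset.sum_subset (Finset.subset_univ I) fun l _ hl => by simp [hxI l hl]
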